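/- arXiv:2306.15520 — 3 statements merged into one kernel-verified Lean document; each statement's English description precedes it below -/
import Mathlib

section
/- For any reduced word w in the free group F_n (n ≥ 2), the left extension relation l_w = p_w - Σ_{s ∈ S̄ \ {w_1^{-1}}} p_{sw} is a bounded function on F_n, taking only the values 0 and 1 on nonempty reduced words. -/
open List Finset

/-- Number of occurrences of `w` as a contiguous subword of `v`. -/
def occ {α : Type*} [DecidableEq α] (w v : List α) : ℕ :=
  ((List.range (v.length + 1 - w.length)).filter (fun i => decide (w <+: v.drop i))).length

/-- Elementary counting function, with the convention `p_ε(v) = |v|`. -/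
def cnt {α : Type*} [DecidableEq α] (w v : List α) : ℚ :=
  if w = [] then v.length else occ w v

/-- The inverse of a letter of `S̄`: letters are pairs (generator, sign). -/
def invL {n : ℕ} (a : Fin n × Bool) : Fin n × Bool := (a.1, !a.2)

/-- The inverse of a (reduced) word. -/
def invW {n : ℕ} (w : List (Fin n × Bool)) : List (Fin n × Bool) := (w.map invL).reverse

def redB {n : ℕ} : List (Fin n × Bool) → Bool
  | a :: b :: t => decide (b ≠ invL a) && redB (b :: t)
  | _ => true

/-- A word over `S̄` is reduced if no letter is followed by its inverse. -/
def Red {n : ℕ} (w : List (Fin n × Bool)) : Prop := redB w = true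

instance {n : ℕ} : DecidablePred (Red (n := n)) := fun _ => instDecidableEqBool _ _

/-- Left extension relation `l_w = p_w - Σ_{s : sw reduced} p_{sw}`. -/
def lgrp {n : ℕ} (w v : List (Fin n × Bool)) : ℚ :=
  cnt w v - ∑ s ∈ Finset.univ.filter (fun s => Red (s :: w)), cnt (s :: w) v

/-- Right extension relation `r_w = p_w - Σ_{s : ws reduced} p_{ws}`. -/
def rgrp {n : ℕ} (w v : List (Fin n × Bool)) : ℚ :=
  cnt w v - ∑ s ∈ Finset.univ.filter (fun s => Red (w ++ [s])), cnt (w ++ [s]) v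

/-- The map `σ₁` sending a function on F_n to `f - f ∘ (·⁻¹)`; on counting functions
it sends `p_w` to the Brooks quasimorphism `φ_w = p_w - p_{w⁻¹}`. -/
def sig1 {n : ℕ} (f : List (Fin n × Bool) → ℚ) : List (Fin n × Bool) → ℚ :=
  fun v => f v - f (invW v)

lemma occ_nil {α : Type*} [DecidableEq α] (w : List α) (hw : w ≠ []) : occ w [] = 0 := by
  have : w.length ≠ 0 := by simpa using hw
  unfold occ
  have : (1 : ℕ) - w.length = 0 := by omega
  simp [this]

lemma occ_cons {α : Type*} [DecidableEq α] (w : List α) (hw : w ≠ []) (a : α) (v : List α) :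
    occ w (a :: v) = (if w <+: a :: v then 1 else 0) + occ w v := by
  have hwl : 1 ≤ w.length := by
    cases w with
    | nil => simp at hw
    | cons b t => simp
  by_cases h : w.length ≤ v.length + 1
  · have h1 : (a :: v).length + 1 - w.length = (v.length + 1 - w.length) + 1 := by
      simp only [List.length_cons]; omega
    unfold occ
    rw [h1, List.range_succ_eq_map, List.filter_cons]
    have hmap : (List.filter (fun i => decide (w <+: (a :: v).drop i))
        ((List.range (v.length + 1 - w.length)).map Nat.succ)).length
        = (List.filter (fun i => decide (w <+: v.drop i))
            (List.range (v.length + 1 - w.length))).length := by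
      rw [List.filter_map, List.length_map]
      rfl
    by_cases hp : w <+: a :: v
    · simp only [List.drop_zero, hp, decide_true, if_true, List.length_cons, hmap]
      omega
    · simp only [List.drop_zero, hp, decide_false, if_false, Nat.zero_add]
      rw [if_neg (by simp)]
      exact hmap
  · have h2 : (a :: v).length + 1 - w.length = 0 := by
      simp only [List.length_cons]; omega
    have h3 : v.length + 1 - w.length = 0 := by omega
    have hp : ¬ (w <+: a :: v) := by
      intro hc
      have := hc.length_le
      simp at this; omega
    unfold occ
    rw [h2, h3]
    simp [hp]

lemma red_tail {n : ℕ} {a : Fin n × Bool} {v : List (Fin n × Bool)} (h : Red (a :: v)) :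
    Red v := by
  cases v with
  | nil => rfl
  | cons b t =>
    have : redB (a :: b :: t) = true := h
    rw [redB] at this
    exact ((Bool.and_eq_true _ _).mp this).2

lemma red_cons_of_prefix {n : ℕ} {a : Fin n × Bool} {w v : List (Fin n × Bool)}
    (hw : Red w) (hne : w ≠ []) (hv : Red (a :: v)) (hp : w <+: v) : Red (a :: w) := by
  cases w with
  | nil => simp at hne
  | cons b t =>
    obtain ⟨u, hu⟩ := hp
    subst hu
    have : redB (a :: b :: (t ++ u)) = true := hv
    rw [redB] at this
    have hb : b ≠ invL a := by
      have := ((Bool.and_eq_true _ _).mp this).1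
      simpa using this
    show redB (a :: b :: t) = true
    rw [redB]
    simp only [hb, decide_true, Bool.true_and, ne_eq, not_false_eq_true]
    exact hw

lemma sum_occ {n : ℕ} (w : List (Fin n × Bool)) (hw : Red w) (hne : w ≠ [])
    (v : List (Fin n × Bool)) (hv : Red v) :
    (occ w v : ℚ) = (if w <+: v then 1 else 0) +
      ∑ s ∈ Finset.univ.filter (fun s => Red (s :: w)), (occ (s :: w) v : ℚ) := by
  induction v with
  | nil =>
    have hp : ¬ (w <+: ([] : List (Fin n × Bool))) := by
      intro h; exact hne (List.prefix_nil.mp h)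
    simp [occ_nil w hne, occ_nil _ (by simp : (_ :: w) ≠ []), hp]
  | cons a v ih =>
    have hv' : Red v := red_tail hv
    rw [occ_cons w hne a v]
    push_cast
    rw [ih hv']
    have hsum : ∀ s : Fin n × Bool, (occ (s :: w) (a :: v) : ℚ)
        = (if s :: w <+: a :: v then 1 else 0) + occ (s :: w) v := by
      intro s
      rw [occ_cons (s :: w) (by simp) a v]
      push_cast
      by_cases h : s :: w <+: a :: v <;> simp [h]
    rw [Finset.sum_congr rfl (fun s _ => hsum s), Finset.sum_add_distrib]
    have hind : ∑ s ∈ Finset.univ.filter (fun s => Red (s :: w)),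
        (if s :: w <+: a :: v then (1:ℚ) else 0) = if w <+: v then 1 else 0 := by
      by_cases hp : w <+: v
      · rw [Finset.sum_eq_single a]
        · simp [List.cons_prefix_cons, hp]
        · intro s hs hsa
          simp [List.cons_prefix_cons, hsa]
        · intro ha
          exact absurd (Finset.mem_filter.mpr ⟨Finset.mem_univ a,
            red_cons_of_prefix hw hne hv hp⟩) ha
      · rw [if_neg hp]
        apply Finset.sum_eq_zero
        intro s _
        simp [List.cons_prefix_cons, hp]
    rw [hind]

lemma sum_occ_single {n : ℕ} (v : List (Fin n × Bool)) :
    ∑ s : Fin n × Bool, (occ [s] v : ℚ) = v.length := by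
  induction v with
  | nil => simp [occ_nil]
  | cons a v ih =>
    have h : ∀ s : Fin n × Bool, (occ [s] (a :: v) : ℚ)
        = (if s = a then 1 else 0) + occ [s] v := by
      intro s
      rw [occ_cons [s] (by simp) a v]
      push_cast
      have : ([s] <+: a :: v) ↔ s = a := by
        simp [List.cons_prefix_cons]
      by_cases hs : s = a <;> simp [this, hs]
    rw [Finset.sum_congr rfl (fun s _ => h s), Finset.sum_add_distrib, ih,
      Finset.sum_ite_eq' Finset.univ a (fun _ => (1:ℚ))]
    simp
    ring

lemma lgrp_eq {n : ℕ} (w : List (Fin n × Bool)) (hw : Red w) (v : List (Fin n × Bool))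
    (hv : Red v) : lgrp w v = if w ≠ [] ∧ w <+: v then 1 else 0 := by
  by_cases hne : w = []
  · subst hne
    have hf : (Finset.univ.filter (fun s : Fin n × Bool => Red [s])) = Finset.univ := by
      apply Finset.filter_true_of_mem
      intro s _
      rfl
    simp only [lgrp, cnt, if_pos rfl, hf]
    have : ∀ s : Fin n × Bool, (if ([s] : List (Fin n × Bool)) = [] then ((v.length : ℚ)) else occ [s] v) = occ [s] v := by
      intro s; simp
    rw [Finset.sum_congr rfl (fun s _ => this s), sum_occ_single]
    simp
  · have h1 : cnt w v = occ w v := by simp [cnt, hne]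
    have h2 : ∀ s : Fin n × Bool, cnt (s :: w) v = occ (s :: w) v := by
      intro s; simp [cnt]
    rw [lgrp, h1, Finset.sum_congr rfl (fun s _ => h2 s), sum_occ w hw hne v hv]
    by_cases hp : w <+: v <;> simp [hp, hne]

/-- For any reduced word w in F_n, the left extension relation
l_w = p_w - Σ_{s : sw reduced} p_{sw} takes only the values 0 and 1 on nonempty
reduced words; in particular it is a bounded function on F_n. -/
theorem stmt_3 (n : ℕ) (hn : 2 ≤ n) (w : List (Fin n × Bool)) (hw : Red w) :
    (∀ v : List (Fin n × Bool), Red v → v ≠ [] → lgrp w v = 0 ∨ lgrp w v = 1) ∧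
    (∃ C : ℚ, ∀ v : List (Fin n × Bool), Red v → |lgrp w v| ≤ C) := by
  constructor
  · intro v hv _
    rw [lgrp_eq w hw v hv]
    by_cases h : w ≠ [] ∧ w <+: v
    · right; simp [h]
    · left; simp [h]
  · refine ⟨1, fun v hv => ?_⟩
    rw [lgrp_eq w hw v hv]
    by_cases h : w ≠ [] ∧ w <+: v <;> simp [h]
end

section
/- For any reduced word w in F_n, the symmetry relation s_w = p_w + p_{w^{-1}} lies in the kernel of the map σ_1: C(F_n) → Br(F_n) defined by σ_1(p_u) = p_u - p_{u^{-1}}; more generally, ker σ_1 is exactly the set of symmetric counting functions and is spanned by {s_w : w reduced, nonempty}. -/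
open List Finset

/-! ### Auxiliary lemmas -/

lemma occ_eq_card {α : Type*} [DecidableEq α] (w v : List α) :
    occ w v = ((Finset.range (v.length + 1 - w.length)).filter (fun i => w <+: v.drop i)).card :=
  rfl

lemma invL_invL {n : ℕ} (a : Fin n × Bool) : invL (invL a) = a := by simp [invL]

lemma invW_invW {n : ℕ} (w : List (Fin n × Bool)) : invW (invW w) = w := by
  simp [invW, List.map_reverse, List.map_map, Function.comp_def, invL_invL]

lemma invW_length {n : ℕ} (w : List (Fin n × Bool)) : (invW w).length = w.length := by simp [invW]

lemma invW_append {n : ℕ} (a b : List (Fin n × Bool)) : invW (a ++ b) = invW b ++ invW a := by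
  simp [invW]

lemma invW_nil {n : ℕ} : invW ([] : List (Fin n × Bool)) = [] := rfl

lemma invW_eq_nil {n : ℕ} {w : List (Fin n × Bool)} : invW w = [] ↔ w = [] := by simp [invW]

lemma occ_zero_of_lt {α : Type*} [DecidableEq α] {w v : List α} (h : v.length < w.length) :
    occ w v = 0 := by
  have : v.length + 1 - w.length = 0 := by omega
  simp [occ, this]

lemma occ_zero_of_len_eq {α : Type*} [DecidableEq α] {w v : List α}
    (h : w.length = v.length) (hne : w ≠ v) : occ w v = 0 := by
  have h1 : v.length + 1 - w.length = 1 := by omega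
  simp only [occ, h1, List.range_succ, List.range_zero, List.nil_append, List.filter,
    List.drop_zero]
  have : ¬ w <+: v := fun hp => hne (hp.eq_of_length h)
  simp [this]

lemma occ_self {α : Type*} [DecidableEq α] (w : List α) : occ w w = 1 := by
  simp [occ, Nat.add_sub_cancel_left, List.range_succ]

lemma red_iff_chain {n : ℕ} : ∀ w : List (Fin n × Bool),
    Red w ↔ w.Chain' (fun a b => b ≠ invL a)
  | [] => by simp [Red, redB, List.Chain']
  | [a] => by simp [Red, redB, List.Chain']
  | a :: b :: t => by
    rw [Red, redB, Bool.and_eq_true, decide_eq_true_iff, List.Chain', List.isChain_cons_cons]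
    exact and_congr Iff.rfl (red_iff_chain (b :: t))

lemma Red_invW {n : ℕ} {w : List (Fin n × Bool)} (h : Red w) : Red (invW w) := by
  rw [red_iff_chain] at h ⊢
  rw [invW, List.Chain', List.isChain_reverse, List.isChain_map]
  refine List.IsChain.imp ?_ h
  intro a b hab
  show invL a ≠ invL (invL b)
  rw [invL_invL]
  intro he
  exact hab he.symm

lemma occ_invW_le {n : ℕ} {w v : List (Fin n × Bool)} {i : ℕ}
    (hi : i + w.length ≤ v.length) (h : w <+: v.drop i) :
    invW w <+: (invW v).drop (v.length - w.length - i) := by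
  obtain ⟨t, ht⟩ := h
  have hv : v = v.take i ++ (w ++ t) := by rw [ht]; exact (List.take_append_drop i v).symm
  have hlt : t.length = v.length - w.length - i := by
    have := congrArg List.length ht
    simp at this
    omega
  have hiv : invW v = invW t ++ (invW w ++ invW (v.take i)) := by
    conv_lhs => rw [hv]
    rw [invW_append, invW_append, List.append_assoc]
  rw [hiv, ← hlt, show t.length = (invW t).length from (invW_length t).symm,
    List.drop_left]
  exact ⟨invW (v.take i), rfl⟩

lemma occ_invW {n : ℕ} (w v : List (Fin n × Bool)) : occ (invW w) (invW v) = occ w v := by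
  rcases lt_or_ge v.length w.length with h | h
  · rw [occ_zero_of_lt h, occ_zero_of_lt (by simpa [invW_length] using h)]
  rw [occ_eq_card, occ_eq_card, invW_length, invW_length]
  refine (Finset.card_bij' (fun i _ => v.length - w.length - i)
    (fun i _ => v.length - w.length - i) ?_ ?_ ?_ ?_).symm
  · intro i hi
    simp only [Finset.mem_filter, Finset.mem_range] at hi ⊢
    refine ⟨by omega, occ_invW_le (by omega) hi.2⟩
  · intro i hi
    simp only [Finset.mem_filter, Finset.mem_range] at hi ⊢
    have := occ_invW_le (w := invW w) (v := invW v) (i := i)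
      (by rw [invW_length, invW_length]; omega) hi.2
    rw [invW_invW, invW_invW, invW_length, invW_length] at this
    exact ⟨by omega, this⟩
  · intro i hi; simp only [Finset.mem_filter, Finset.mem_range] at hi; omega
  · intro i hi; simp only [Finset.mem_filter, Finset.mem_range] at hi; omega

lemma occ_invW' {n : ℕ} (w v : List (Fin n × Bool)) : occ w (invW v) = occ (invW w) v := by
  conv_lhs => rw [← invW_invW w]
  exact occ_invW (invW w) v

lemma cnt_invW {n : ℕ} (w v : List (Fin n × Bool)) : cnt w (invW v) = cnt (invW w) v := by
  by_cases h : w = []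
  · subst h; simp [cnt, invW_nil, invW_length]
  · have h2 : invW w ≠ [] := fun he => h (invW_eq_nil.mp he)
    simp [cnt, h, h2, occ_invW']

/-- Linear independence of the counting functions `occ w` over reduced words. -/
lemma indep {n : ℕ} (c : List (Fin n × Bool) → ℚ) :
    ∀ T : Finset (List (Fin n × Bool)), (∀ w ∈ T, Red w) →
      (∀ v, Red v → ∑ w ∈ T, c w * (occ w v : ℚ) = 0) → ∀ w ∈ T, c w = 0 := by
  intro T
  induction T using Finset.strongInduction with
  | _ T ih =>
    intro hred hsum w hw
    obtain ⟨w₀, hw₀, hmin⟩ := Finset.exists_min_image T (fun u => u.length) ⟨w, hw⟩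
    have hc0 : c w₀ = 0 := by
      have h0 := hsum w₀ (hred w₀ hw₀)
      rw [Finset.sum_eq_single_of_mem w₀ hw₀ ?_] at h0
      · simpa [occ_self] using h0
      · intro u hu hne
        rcases eq_or_lt_of_le (hmin u hu) with he | hl
        · simp [occ_zero_of_len_eq he.symm hne]
        · simp [occ_zero_of_lt hl]
    rcases eq_or_ne w w₀ with rfl | hne
    · exact hc0
    · refine ih (T.erase w₀) (Finset.erase_ssubset hw₀)
        (fun u hu => hred u (Finset.mem_of_mem_erase hu)) ?_ w
        (Finset.mem_erase.mpr ⟨hne, hw⟩)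
      intro v hv
      have h1 := hsum v hv
      rw [← Finset.add_sum_erase T _ hw₀, hc0] at h1
      linarith

/-- Every symmetry relation s_w = p_w + p_{w⁻¹} lies in ker σ₁; more generally, a counting
function lies in ker σ₁ iff its coefficients are symmetric, iff it lies in the span of the
symmetry relations s_w for nonempty reduced w. -/
theorem stmt_9 (n : ℕ) (hn : 2 ≤ n) :
    (∀ w : List (Fin n × Bool), Red w →
      ∀ v : List (Fin n × Bool), Red v → sig1 (fun u => cnt w u + cnt (invW w) u) v = 0) ∧
    (∀ x : List (Fin n × Bool) →₀ ℚ, (∀ w ∈ x.support, Red w ∧ w ≠ []) →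
      (((∀ v : List (Fin n × Bool), Red v →
          sig1 (fun u => ∑ w ∈ x.support, x w * (occ w u : ℚ)) v = 0) ↔
        (∀ w : List (Fin n × Bool), x w = x (invW w))) ∧
       ((∀ v : List (Fin n × Bool), Red v →
          sig1 (fun u => ∑ w ∈ x.support, x w * (occ w u : ℚ)) v = 0) ↔
        (fun u => ∑ w ∈ x.support, x w * (occ w u : ℚ)) ∈
          Submodule.span ℚ {g : List (Fin n × Bool) → ℚ |
            ∃ w, Red w ∧ w ≠ [] ∧ g = fun u => (occ w u : ℚ) + (occ (invW w) u : ℚ)}))) := by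
  constructor
  · intro w _ v _
    simp only [sig1]
    rw [cnt_invW w v, cnt_invW (invW w) v, invW_invW]
    ring
  · intro x hx
    have hsig : ∀ v, sig1 (fun u => ∑ w ∈ x.support, x w * (occ w u : ℚ)) v =
        ∑ w ∈ x.support, x w * (occ w v : ℚ)
          - ∑ w ∈ x.support, x w * (occ (invW w) v : ℚ) := by
      intro v
      simp only [sig1]
      congr 1
      refine Finset.sum_congr rfl fun w _ => ?_
      rw [occ_invW' w v]
    -- kernel condition implies symmetry
    have dir1 : (∀ v, Red v → sig1 (fun u => ∑ w ∈ x.support, x w * (occ w u : ℚ)) v = 0) →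
        ∀ w, x w = x (invW w) := by
      intro hker
      set T := x.support ∪ x.support.image invW with hT
      have hsub : x.support ⊆ T := Finset.subset_union_left
      have hTred : ∀ w ∈ T, Red w := by
        intro w hw
        rcases Finset.mem_union.mp hw with h | h
        · exact (hx w h).1
        · obtain ⟨u, hu, rfl⟩ := Finset.mem_image.mp h
          exact Red_invW (hx u hu).1
      have hTinv : ∀ w ∈ T, invW w ∈ T := by
        intro w hw
        rcases Finset.mem_union.mp hw with h | h
        · exact Finset.mem_union_right _ (Finset.mem_image_of_mem _ h)
        · obtain ⟨u, hu, rfl⟩ := Finset.mem_image.mp h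
          rw [invW_invW]; exact Finset.mem_union_left _ hu
      have hzero : ∀ w ∈ T, x w - x (invW w) = 0 := by
        refine indep _ T hTred ?_
        intro v hv
        have h1 : ∑ w ∈ T, (x w - x (invW w)) * (occ w v : ℚ)
            = ∑ w ∈ T, x w * (occ w v : ℚ) - ∑ w ∈ T, x (invW w) * (occ w v : ℚ) := by
          rw [← Finset.sum_sub_distrib]
          exact Finset.sum_congr rfl fun w _ => by ring
        have h2 : ∑ w ∈ x.support, x w * (occ w v : ℚ) = ∑ w ∈ T, x w * (occ w v : ℚ) :=
          Finset.sum_subset hsub (fun w _ hw => by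
            rw [Finsupp.notMem_support_iff.mp hw]; ring)
        have h3a : ∑ w ∈ T, x (invW w) * (occ w v : ℚ)
            = ∑ w ∈ T, x w * (occ (invW w) v : ℚ) := by
          refine Finset.sum_nbij' (i := invW) (j := invW) hTinv hTinv
            (fun a _ => invW_invW a) (fun a _ => invW_invW a) ?_
          intro a _
          rw [invW_invW]
        have h3b : ∑ w ∈ x.support, x w * (occ (invW w) v : ℚ)
            = ∑ w ∈ T, x w * (occ (invW w) v : ℚ) :=
          Finset.sum_subset hsub (fun w _ hw => by
            rw [Finsupp.notMem_support_iff.mp hw]; ring)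
        rw [h1, ← h2, h3a, ← h3b]
        have h4 := hker v hv
        rw [hsig v] at h4
        exact h4
      intro w
      by_cases hw : w ∈ T
      · have := hzero w hw; linarith
      · have h1 : x w = 0 := by
          by_contra h; exact hw (hsub (Finsupp.mem_support_iff.mpr h))
        have h2 : x (invW w) = 0 := by
          by_contra h
          have hmem : invW w ∈ x.support := Finsupp.mem_support_iff.mpr h
          have hmem2 := Finset.mem_union_right (x.support) (Finset.mem_image_of_mem invW hmem)
          rw [invW_invW] at hmem2
          exact hw hmem2
        rw [h1, h2]
    -- symmetry implies kernel condition
    have dir2 : (∀ w, x w = x (invW w)) →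
        ∀ v, sig1 (fun u => ∑ w ∈ x.support, x w * (occ w u : ℚ)) v = 0 := by
      intro hsym v
      rw [hsig v]
      have hsupp : ∀ w ∈ x.support, invW w ∈ x.support := by
        intro w hw
        rw [Finsupp.mem_support_iff] at hw ⊢
        rw [← hsym w]; exact hw
      have h5 : ∑ w ∈ x.support, x w * (occ (invW w) v : ℚ)
          = ∑ w ∈ x.support, x w * (occ w v : ℚ) := by
        refine Finset.sum_nbij' (i := invW) (j := invW) hsupp hsupp
          (fun a _ => invW_invW a) (fun a _ => invW_invW a) ?_
        intro a _
        rw [hsym a]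
      rw [h5]; ring
    -- symmetry implies span membership
    have dir3 : (∀ w, x w = x (invW w)) →
        (fun u => ∑ w ∈ x.support, x w * (occ w u : ℚ)) ∈
          Submodule.span ℚ {g : List (Fin n × Bool) → ℚ |
            ∃ w, Red w ∧ w ≠ [] ∧ g = fun u => (occ w u : ℚ) + (occ (invW w) u : ℚ)} := by
      intro hsym
      have hsupp : ∀ w ∈ x.support, invW w ∈ x.support := by
        intro w hw
        rw [Finsupp.mem_support_iff] at hw ⊢
        rw [← hsym w]; exact hw
      have hfe : (fun u => ∑ w ∈ x.support, x w * (occ w u : ℚ)) =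
          ∑ w ∈ x.support, (x w / 2) •
            (fun u => (occ w u : ℚ) + (occ (invW w) u : ℚ)) := by
        funext u
        rw [Finset.sum_apply]
        simp only [Pi.smul_apply, smul_eq_mul]
        have e1 : ∑ w ∈ x.support, x w / 2 * ((occ w u : ℚ) + (occ (invW w) u : ℚ))
            = ∑ w ∈ x.support, x w / 2 * (occ w u : ℚ)
              + ∑ w ∈ x.support, x w / 2 * (occ (invW w) u : ℚ) := by
          rw [← Finset.sum_add_distrib]
          exact Finset.sum_congr rfl fun w _ => by ring
        have e2 : ∑ w ∈ x.support, x w / 2 * (occ (invW w) u : ℚ)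
            = ∑ w ∈ x.support, x w / 2 * (occ w u : ℚ) := by
          refine Finset.sum_nbij' (i := invW) (j := invW) hsupp hsupp
            (fun a _ => invW_invW a) (fun a _ => invW_invW a) ?_
          intro a _
          rw [hsym a]
        rw [e1, e2, ← Finset.sum_add_distrib]
        exact Finset.sum_congr rfl fun w _ => by ring
      rw [hfe]
      refine Submodule.sum_mem _ fun w hw => Submodule.smul_mem _ _ (Submodule.subset_span ?_)
      exact ⟨w, (hx w hw).1, (hx w hw).2, rfl⟩
    -- span membership implies kernel condition
    have dir4 : ∀ g : List (Fin n × Bool) → ℚ,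
        g ∈ Submodule.span ℚ {g : List (Fin n × Bool) → ℚ |
            ∃ w, Red w ∧ w ≠ [] ∧ g = fun u => (occ w u : ℚ) + (occ (invW w) u : ℚ)} →
        ∀ v, sig1 g v = 0 := by
      intro g hg
      refine Submodule.span_induction (p := fun g _ => ∀ v, sig1 g v = 0) ?_ ?_ ?_ ?_ hg
      · rintro g ⟨w, _, _, rfl⟩ v
        simp only [sig1]
        rw [occ_invW' w v, occ_invW' (invW w) v, invW_invW]
        ring
      · intro v; simp [sig1]
      · intro a b _ _ ha hb v
        have h1 := ha v
        have h2 := hb v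
        simp only [sig1, Pi.add_apply] at h1 h2 ⊢
        linarith
      · intro c a _ ha v
        have h1 := ha v
        simp only [sig1, Pi.smul_apply, smul_eq_mul] at h1 ⊢
        have h2 : a v = a (invW v) := by linarith
        rw [h2]; ring
    constructor
    · exact ⟨fun h => dir1 h, fun h v _ => dir2 h v⟩
    · exact ⟨fun h => dir3 (dir1 h), fun h v _ => dir4 _ h v⟩
end

section
/- Let f = Σ_i x_i p_{w_i} be a counting function on M_n with all w_i nonempty, not starting or ending with a_1, all x_i ≠ 0, and let w be a shortest word among the w_i and L the maximal length of the w_i. Then for v = w a_1^L and every k ≥ 1, f(v^k) = k·x_w; hence f is unbounded. -/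
open List Finset

lemma len_fr {α : Type*} (v : List α) (k : ℕ) :
    (List.flatten (List.replicate k v)).length = k * v.length := by
  simp [List.length_flatten, List.map_replicate, List.sum_replicate, smul_eq_mul]

lemma getElem_fr {α : Type*} (v : List α) : ∀ (q k r : ℕ) (hr : r < v.length) (_ : q < k)
    (hb : q * v.length + r < (List.flatten (List.replicate k v)).length),
    (List.flatten (List.replicate k v))[q * v.length + r] = v[r] := by
  intro q
  induction q with
  | zero =>
    intro k r hr hq hb
    obtain ⟨k', rfl⟩ : ∃ k', k = k' + 1 := ⟨k - 1, by omega⟩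
    simp only [List.replicate_succ, List.flatten_cons, Nat.zero_mul, Nat.zero_add] at hb ⊢
    exact List.getElem_append_left hr
  | succ q ih =>
    intro k r hr hq hb
    obtain ⟨k', rfl⟩ : ∃ k', k = k' + 1 := ⟨k - 1, by omega⟩
    simp only [List.replicate_succ, List.flatten_cons] at hb ⊢
    have h1 : v.length ≤ (q + 1) * v.length + r := by rw [Nat.succ_mul]; omega
    rw [List.getElem_append_right h1]
    have h2 : (q + 1) * v.length + r - v.length = q * v.length + r := by rw [Nat.succ_mul]; omega
    simp only [h2]
    exact ih k' r hr (by omega)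
      (by rw [len_fr]; rw [List.length_append, len_fr, Nat.succ_mul] at hb; omega)

lemma getElem_fr' {α : Type*} (v : List α) (k i : ℕ) (hv : 0 < v.length)
    (h : i < (List.flatten (List.replicate k v)).length) :
    (List.flatten (List.replicate k v))[i] = v[i % v.length]'(Nat.mod_lt _ hv) := by
  have hq : i / v.length < k := by
    rw [len_fr] at h
    rw [Nat.div_lt_iff_lt_mul hv]
    omega
  have heq : i / v.length * v.length + i % v.length = i := by
    rw [Nat.mul_comm, Nat.div_add_mod]
  have h2 := getElem_fr v (i / v.length) k (i % v.length) (Nat.mod_lt _ hv) hq (by omega)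
  simp only [heq] at h2
  exact h2

lemma getElem_idx_congr {α : Type*} (l : List α) {i j : ℕ} (h : i = j) (hj : j < l.length) :
    l[i]'(h ▸ hj) = l[j]'hj := by subst h; rfl

lemma prefix_drop_iff {α : Type*} {u l : List α} (hu : u ≠ []) (j : ℕ) :
    u <+: l.drop j ↔ j + u.length ≤ l.length ∧
      ∀ t, ∀ ht : t < u.length, l[j + t]? = some (u[t]'ht) := by
  constructor
  · intro h
    have hlen : u.length ≤ (l.drop j).length := h.length_le
    rw [List.length_drop] at hlen
    have hu0 : 0 < u.length := List.length_pos_iff.mpr hu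
    have hjl : j + u.length ≤ l.length := by omega
    refine ⟨hjl, fun t ht => ?_⟩
    have := h.getElem (i := t) ht
    rw [← List.getElem?_drop]
    rw [List.getElem?_eq_getElem (by rw [List.length_drop]; omega)]
    rw [← this]
  · rintro ⟨hjl, hget⟩
    rw [List.prefix_iff_eq_take]
    apply List.ext_getElem
    · rw [List.length_take, List.length_drop]; omega
    · intro t h1 h2
      rw [List.getElem_take, List.getElem_drop]
      have := hget t h1
      rw [List.getElem?_eq_getElem (by omega)] at this
      exact (Option.some_injective _ this).symm

lemma count_mult (P m k : ℕ) (hm : 1 ≤ m) (hmP : m ≤ P) (hk : 1 ≤ k) :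
    ((List.range (k * P + 1 - m)).filter (fun i => decide (i % P = 0))).length = k := by
  have h0 : 0 < P := by omega
  have hconv : ((List.range (k * P + 1 - m)).filter (fun i => decide (i % P = 0))).length
      = ((Finset.range (k * P + 1 - m)).filter (fun i => i % P = 0)).card := rfl
  rw [hconv]
  have hkP : m ≤ k * P := le_trans hmP (Nat.le_mul_of_pos_left _ (by omega))
  have himg : (Finset.range (k * P + 1 - m)).filter (fun i => i % P = 0)
      = (Finset.range k).image (· * P) := by
    ext i
    simp only [Finset.mem_filter, Finset.mem_range, Finset.mem_image]
    constructor
    · rintro ⟨hi, hmod⟩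
      refine ⟨i / P, ?_, ?_⟩
      · rw [Nat.div_lt_iff_lt_mul h0]; omega
      · have := Nat.div_add_mod i P
        rw [Nat.mul_comm]
        omega
    · rintro ⟨q, hq, rfl⟩
      constructor
      · have h1 : (q + 1) * P ≤ k * P := Nat.mul_le_mul_right _ (by omega)
        rw [Nat.add_mul] at h1; omega
      · exact Nat.mul_mod_left q P
  rw [himg, Finset.card_image_of_injective _
    (fun a b h => Nat.eq_of_mul_eq_mul_right h0 h), Finset.card_range]

/-- For f = Σ x_i p_{w_i} with all w_i nonempty, not starting or ending with a_1,
w a shortest word of the support and L the maximal length, one has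
f((w a_1^L)^k) = k x_w for all k ≥ 1; hence f is unbounded. -/
theorem stmt_12 (n : ℕ) (hn : 2 ≤ n) (x : List (Fin n) →₀ ℚ) (w : List (Fin n)) (L : ℕ)
    (hsupp : ∀ u ∈ x.support, u ≠ [] ∧ u.head? ≠ some (⟨0, by omega⟩ : Fin n) ∧
      u.getLast? ≠ some (⟨0, by omega⟩ : Fin n))
    (hw : w ∈ x.support)
    (hshort : ∀ u ∈ x.support, w.length ≤ u.length)
    (hLmax : ∀ u ∈ x.support, u.length ≤ L)
    (hLatt : ∃ u ∈ x.support, u.length = L) :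
    (∀ k : ℕ, 1 ≤ k →
      ∑ u ∈ x.support, x u *
        (occ u (List.flatten (List.replicate k (w ++ List.replicate L (⟨0, by omega⟩ : Fin n)))) : ℚ)
        = k * x w) ∧
    ¬ ∃ C : ℚ, ∀ v : List (Fin n), |∑ u ∈ x.support, x u * (occ u v : ℚ)| ≤ C := by
  have hz : 0 < n := by omega
  set z : Fin n := ⟨0, hz⟩ with hzdef
  set v : List (Fin n) := w ++ List.replicate L z with hvdef
  have hw0 : w ≠ [] := (hsupp w hw).1
  have hm1 : 1 ≤ w.length := List.length_pos_iff.mpr hw0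
  have hmL : w.length ≤ L := by obtain ⟨u, hu, h⟩ := hLatt; exact h ▸ hshort u hu
  have hPv : v.length = w.length + L := by simp [hvdef]
  have hP0 : 0 < v.length := by omega
  -- letters of v
  have hvr : ∀ (r : ℕ) (h : r < v.length) (hr : r < w.length), v[r]'h = w[r]'hr :=
    fun r h hr => List.getElem_append_left hr
  have hvz : ∀ (r : ℕ) (h : r < v.length), w.length ≤ r → v[r]'h = z := by
    intro r h hr
    show (w ++ List.replicate L z)[r]'h = z
    rw [List.getElem_append_right hr]
    exact List.getElem_replicate _
  have modcalc : ∀ i t : ℕ, i % v.length = 0 → t < v.length → (i + t) % v.length = t := by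
    intro i t h ht
    obtain ⟨q, rfl⟩ := Nat.dvd_of_mod_eq_zero h
    rw [Nat.mul_add_mod, Nat.mod_eq_of_lt ht]
  have key : ∀ k : ℕ, 1 ≤ k →
      ∑ u ∈ x.support, x u * (occ u (List.flatten (List.replicate k v)) : ℚ) = k * x w := by
    intro k hk
    have hlenvk : (List.flatten (List.replicate k v)).length = k * v.length := len_fr v k
    -- characterize occurrences
    have hchar : ∀ u ∈ x.support, ∀ i : ℕ, i + u.length ≤ k * v.length →
        ((u <+: (List.flatten (List.replicate k v)).drop i) ↔ (i % v.length = 0 ∧ u = w)) := by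
      intro u hu i hi
      obtain ⟨hu0, huh, hul⟩ := hsupp u hu
      have hu1 : 1 ≤ u.length := List.length_pos_iff.mpr hu0
      have huL : u.length ≤ L := hLmax u hu
      have hum : w.length ≤ u.length := hshort u hu
      constructor
      · intro hpre
        rw [prefix_drop_iff hu0] at hpre
        obtain ⟨hle, hget⟩ := hpre
        -- pointwise values
        have hval : ∀ (t : ℕ) (ht : t < u.length),
            v[(i + t) % v.length]'(Nat.mod_lt _ hP0) = u[t]'ht := by
          intro t ht
          obtain ⟨hb, he⟩ := List.getElem?_eq_some_iff.mp (hget t ht)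
          exact (getElem_fr' v k (i + t) hP0 hb).symm.trans he
        have hval' : ∀ (t : ℕ) (ht : t < u.length) (s : ℕ) (hs : s < v.length),
            (i + t) % v.length = s → v[s]'hs = u[t]'ht := by
          intro t ht s hs hseq
          exact (getElem_idx_congr v hseq hs).symm.trans (hval t ht)
        have hrP : i % v.length < v.length := Nat.mod_lt _ hP0
        have hdm := Nat.div_add_mod i v.length
        -- first letter not z
        have hr_lt : i % v.length < w.length := by
          by_contra hge
          push_neg at hge
          apply huh
          rw [List.head?_eq_head hu0, List.head_eq_getElem]
          exact congrArg some
            ((hval' 0 (by omega) (i % v.length) hrP (by rw [Nat.add_zero])).symm.trans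
              (hvz _ hrP hge))
        -- last letter not z
        have hrm : i % v.length + u.length ≤ w.length := by
          by_contra hge
          push_neg at hge
          have hs : i % v.length + (u.length - 1) < v.length := by omega
          have hmod2 : (i + (u.length - 1)) % v.length
              = i % v.length + (u.length - 1) := by
            have h1 : i + (u.length - 1)
                = v.length * (i / v.length) + (i % v.length + (u.length - 1)) := by omega
            rw [h1, Nat.mul_add_mod, Nat.mod_eq_of_lt (by omega)]
          apply hul
          rw [List.getLast?_eq_getLast hu0, List.getLast_eq_getElem]
          exact congrArg some
            ((hval' (u.length - 1) (by omega) _ hs hmod2).symm.trans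
              (hvz _ hs (by omega)))
        have hr0 : i % v.length = 0 := by omega
        have hul0 : u.length = w.length := by omega
        refine ⟨hr0, ?_⟩
        apply List.ext_getElem hul0
        intro t h1 h2
        have hvt : t < v.length := by omega
        exact (hval' t h1 t hvt (modcalc i t hr0 hvt)).symm.trans (hvr t hvt h2)
      · rintro ⟨hmod, rfl⟩
        rw [prefix_drop_iff hu0]
        refine ⟨by rw [hlenvk]; omega, fun t ht => ?_⟩
        rw [List.getElem?_eq_getElem (show i + t < _ by rw [hlenvk]; omega)]
        refine congrArg some ?_
        have hvt : t < v.length := by omega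
        exact (getElem_fr' v k (i + t) hP0 _).trans
          ((getElem_idx_congr v (modcalc i t hmod hvt) hvt).trans (hvr t hvt ht))
    -- occurrence counts
    have hocc : ∀ u ∈ x.support,
        occ u (List.flatten (List.replicate k v)) = if u = w then k else 0 := by
      intro u hu
      unfold occ
      rw [hlenvk]
      by_cases hueq : u = w
      · subst hueq
        rw [if_pos rfl]
        have hcong : (List.range (k * v.length + 1 - u.length)).filter
              (fun i => decide (u <+: (List.flatten (List.replicate k v)).drop i))
            = (List.range (k * v.length + 1 - u.length)).filter
              (fun i => decide (i % v.length = 0)) := by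
          apply List.filter_congr
          intro i hi
          rw [List.mem_range] at hi
          apply decide_eq_decide.mpr
          rw [hchar u hu i (by omega)]
          simp
        rw [hcong]
        exact count_mult v.length u.length k hm1 (by omega) hk
      · rw [if_neg hueq]
        rw [List.length_eq_zero_iff, List.filter_eq_nil_iff]
        intro i hi
        rw [List.mem_range] at hi
        simp only [decide_eq_true_eq]
        intro hpre
        exact hueq ((hchar u hu i (by omega)).mp hpre).2
    rw [Finset.sum_eq_single_of_mem w hw]
    · rw [hocc w hw, if_pos rfl]; ring
    · intro b hb hbw
      rw [hocc b hb, if_neg hbw]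
      simp
  refine ⟨fun k hk => key k hk, ?_⟩
  rintro ⟨C, hC⟩
  have hxw : x w ≠ 0 := Finsupp.mem_support_iff.mp hw
  have habs : 0 < |x w| := abs_pos.mpr hxw
  obtain ⟨k, hkC⟩ := exists_nat_gt (C / |x w|)
  have h1 := hC (List.flatten (List.replicate (k + 1) v))
  rw [key (k + 1) (by omega), abs_mul, Nat.abs_cast] at h1
  have h2 : (C / |x w|) < (((k + 1 : ℕ) : ℚ)) := lt_of_lt_of_le hkC (by push_cast; linarith)
  have h3 : C < ((k + 1 : ℕ) : ℚ) * |x w| := (div_lt_iff₀ habs).mp h2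
  push_cast at h1 h3
  linarith
end
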